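/- Let A, B ⊆ ℤ be finite nonempty sets and let U ⊆ ℤ be a set with |U| ≤ 2 (i.e., U is contained in a two-element set). Then |A + B + U| ≥ |A|^{1/2} · |B|^{1/2} · |U|. -/

import Mathlib

open scoped Pointwise

theorem sumset_with_small_set
    (A B U : Finset ℤ) (hA : A.Nonempty) (hB : B.Nonempty) (hU : U.card ≤ 2) :
    ((A + B + U).card : ℝ) ≥ Real.sqrt A.card * Real.sqrt B.card * U.card := by
  rcases U.eq_empty_or_nonempty with h | hUne
  · subst h; simp
  have h1 : A.card + B.card - 1 ≤ (A + B).card :=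
    cauchy_davenport_add_of_linearOrder_isCancelAdd hA hB
  have h2 : (A + B).card + U.card - 1 ≤ (A + B + U).card :=
    cauchy_davenport_add_of_linearOrder_isCancelAdd (hA.add hB) hUne
  have hA1 : 1 ≤ A.card := hA.card_pos
  have hB1 : 1 ≤ B.card := hB.card_pos
  have hU1 : 1 ≤ U.card := hUne.card_pos
  have key : A.card + B.card + U.card ≤ (A + B + U).card + 2 := by omega
  have ha : (1 : ℝ) ≤ Real.sqrt A.card := by
    rw [show (1:ℝ) = Real.sqrt 1 by simp]
    exact Real.sqrt_le_sqrt (by exact_mod_cast hA1)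
  have hb : (1 : ℝ) ≤ Real.sqrt B.card := by
    rw [show (1:ℝ) = Real.sqrt 1 by simp]
    exact Real.sqrt_le_sqrt (by exact_mod_cast hB1)
  have ha2 : Real.sqrt A.card ^ 2 = A.card := Real.sq_sqrt (by positivity)
  have hb2 : Real.sqrt B.card ^ 2 = B.card := Real.sq_sqrt (by positivity)
  have keyR : (A.card : ℝ) + B.card + U.card ≤ (A + B + U).card + 2 := by
    exact_mod_cast key
  have hu1 : (1 : ℝ) ≤ U.card := by exact_mod_cast hU1
  have hu2 : (U.card : ℝ) ≤ 2 := by exact_mod_cast hU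
  nlinarith [sq_nonneg (Real.sqrt A.card - Real.sqrt B.card),
    mul_nonneg (sub_nonneg.2 hu2) (sub_nonneg.2 (by nlinarith : (1:ℝ) ≤ Real.sqrt A.card * Real.sqrt B.card))]
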